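/- Let X : [0,1] → ℝ be a càdlàg function with no negative jumps (X(t) − X(t−) ≥ 0 for all t). For s ∈ [0,1] define Y(s) = m{ inf_{u ≤ r ≤ s} X(r) : 0 ≤ u ≤ s }, the Lebesgue measure of the set of running infima from times u up to s. Then Y is a continuous function of s. -/

import Mathlib

open Set MeasureTheory Filter

/-- A càdlàg function on `[0,1]` is bounded. -/
private lemma cadlag_bdd (X : ℝ → ℝ)
    (hright : ∀ t ∈ Icc (0:ℝ) 1, ContinuousWithinAt X (Ici t) t)
    (hleft : ∀ t ∈ Ioc (0:ℝ) 1, ∃ L : ℝ,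
      Tendsto X (nhdsWithin t (Iio t)) (nhds L) ∧ L ≤ X t) :
    ∃ M : ℝ, ∀ t ∈ Icc (0:ℝ) 1, |X t| ≤ M := by
  set S : Set ℝ := {t | t ∈ Icc (0:ℝ) 1 ∧ ∃ M, ∀ r ∈ Icc (0:ℝ) t, |X r| ≤ M} with hSdef
  have h0S : (0:ℝ) ∈ S := by
    refine ⟨⟨le_refl 0, zero_le_one⟩, |X 0|, ?_⟩
    intro r hr
    have : r = 0 := le_antisymm hr.2 hr.1
    simp [this]
  have hSne : S.Nonempty := ⟨0, h0S⟩
  have hSbdd : BddAbove S := ⟨1, fun t ht => ht.1.2⟩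
  set c := sSup S with hc
  have hc0 : 0 ≤ c := le_csSup hSbdd h0S
  have hc1 : c ≤ 1 := csSup_le hSne (fun t ht => ht.1.2)
  have hcS : c ∈ S := by
    rcases eq_or_lt_of_le hc0 with h | h
    · rw [← h]; exact h0S
    · obtain ⟨L, hL, _⟩ := hleft c ⟨h, hc1⟩
      rw [Metric.tendsto_nhdsWithin_nhds] at hL
      obtain ⟨δ, hδ, hLδ⟩ := hL 1 one_pos
      have hlt : max 0 (c - δ) < c := max_lt h (by linarith)
      obtain ⟨t, htS, htgt⟩ := exists_lt_of_lt_csSup hSne hlt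
      obtain ⟨M, hMt⟩ := htS.2
      refine ⟨⟨hc0, hc1⟩, max M (max (|L| + 1) |X c|), ?_⟩
      intro r hr
      rcases le_or_gt r t with h1 | h1
      · exact le_trans (hMt r ⟨hr.1, h1⟩) (le_max_left _ _)
      · rcases eq_or_lt_of_le hr.2 with h2 | h2
        · rw [h2]
          exact le_trans (le_max_right _ _) (le_max_right _ _)
        · have hd : dist r c < δ := by
            have h3 : c - δ < r := lt_of_le_of_lt (le_max_right 0 (c - δ)) (lt_trans htgt h1)
            rw [Real.dist_eq, abs_of_nonpos (by linarith)]
            linarith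
          have hdr := hLδ (mem_Iio.2 h2) hd
          rw [Real.dist_eq] at hdr
          have : |X r| ≤ |L| + 1 := by
            calc |X r| = |L + (X r - L)| := by ring_nf
              _ ≤ |L| + |X r - L| := abs_add_le _ _
              _ ≤ |L| + 1 := by linarith
          exact le_trans this (le_trans (le_max_left _ _) (le_max_right _ _))
  have hceq : c = 1 := by
    by_contra hne
    have hclt : c < 1 := lt_of_le_of_ne hc1 hne
    have hXr := hright c ⟨hc0, hc1⟩
    rw [Metric.continuousWithinAt_iff] at hXr
    obtain ⟨δ, hδ, hXδ⟩ := hXr 1 one_pos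
    set c' := min (c + δ / 2) 1 with hc'
    have hcc' : c < c' := lt_min (by linarith) hclt
    obtain ⟨M, hMc⟩ := hcS.2
    have hc'S : c' ∈ S := by
      refine ⟨⟨le_trans hc0 hcc'.le, min_le_right _ _⟩, max M (|X c| + 1), ?_⟩
      intro r hr
      rcases le_or_gt r c with h1 | h1
      · exact le_trans (hMc r ⟨hr.1, h1⟩) (le_max_left _ _)
      · have hd : dist r c < δ := by
          rw [Real.dist_eq, abs_of_nonneg (by linarith)]
          have : r ≤ c + δ / 2 := le_trans hr.2 (min_le_left _ _)
          linarith
        have hdr := hXδ (mem_Ici.2 h1.le) hd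
        rw [Real.dist_eq] at hdr
        have : |X r| ≤ |X c| + 1 := by
          calc |X r| = |X c + (X r - X c)| := by ring_nf
            _ ≤ |X c| + |X r - X c| := abs_add_le _ _
            _ ≤ |X c| + 1 := by linarith
        exact le_trans this (le_max_right _ _)
    exact absurd (le_csSup hSbdd hc'S) (not_le.2 hcc')
  obtain ⟨M, hMc⟩ := hcS.2
  exact ⟨M, by rw [hceq] at hMc; exact hMc⟩

private lemma meas_est (E F : Set ℝ) (hF : volume F ≠ ⊤) (a b a' b' : ℝ)
    (h : E ⊆ F ∪ Icc a b ∪ Icc a' b') :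
    (volume E).toReal ≤ (volume F).toReal + (max (b - a) 0 + max (b' - a') 0) := by
  have h1 : volume E ≤ volume F + (ENNReal.ofReal (b - a) + ENNReal.ofReal (b' - a')) := by
    calc volume E ≤ volume (F ∪ Icc a b ∪ Icc a' b') := measure_mono h
      _ ≤ volume (F ∪ Icc a b) + volume (Icc a' b') := measure_union_le _ _
      _ ≤ volume F + volume (Icc a b) + volume (Icc a' b') :=
          add_le_add (measure_union_le _ _) le_rfl
      _ = volume F + (ENNReal.ofReal (b - a) + ENNReal.ofReal (b' - a')) := by
          rw [Real.volume_Icc, Real.volume_Icc, add_assoc]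
  have h2 : volume F + (ENNReal.ofReal (b - a) + ENNReal.ofReal (b' - a')) ≠ ⊤ := by
    simp [hF, ENNReal.add_ne_top]
  calc (volume E).toReal
      ≤ (volume F + (ENNReal.ofReal (b - a) + ENNReal.ofReal (b' - a'))).toReal :=
        ENNReal.toReal_mono h2 h1
    _ = (volume F).toReal + (max (b - a) 0 + max (b' - a') 0) := by
        rw [ENNReal.toReal_add hF (by simp), ENNReal.toReal_add (by simp) (by simp),
          ENNReal.toReal_ofReal', ENNReal.toReal_ofReal']

private lemma key_est (X : ℝ → ℝ) (M : ℝ) (hM : ∀ t ∈ Icc (0:ℝ) 1, |X t| ≤ M)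
    (t₁ t₂ : ℝ) (h0 : 0 ≤ t₁) (h12 : t₁ < t₂) (h21 : t₂ ≤ 1) :
    |(volume {y : ℝ | ∃ u ∈ Icc (0:ℝ) t₂, y = sInf (X '' Icc u t₂)}).toReal
      - (volume {y : ℝ | ∃ u ∈ Icc (0:ℝ) t₁, y = sInf (X '' Icc u t₁)}).toReal|
    ≤ max (X t₁ - sInf (X '' Icc t₁ t₂)) 0
      + max (sSup (X '' Ico t₁ t₂) - sInf (X '' Icc t₁ t₂)) 0 := by
  have hbb : ∀ u v : ℝ, 0 ≤ u → v ≤ 1 → BddBelow (X '' Icc u v) := by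
    intro u v hu hv
    refine ⟨-M, ?_⟩
    rintro y ⟨r, hr, rfl⟩
    have := hM r ⟨le_trans hu hr.1, le_trans hr.2 hv⟩
    linarith [(abs_le.1 this).1]
  have hub : ∀ u v : ℝ, 0 ≤ u → v ≤ 1 → ∀ y ∈ X '' Icc u v, y ≤ M := by
    intro u v hu hv y hy
    obtain ⟨r, hr, rfl⟩ := hy
    exact (abs_le.1 (hM r ⟨le_trans hu hr.1, le_trans hr.2 hv⟩)).2
  have hba : BddAbove (X '' Ico t₁ t₂) :=
    ⟨M, by rintro y ⟨r, hr, rfl⟩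
           exact (abs_le.1 (hM r ⟨le_trans h0 hr.1, le_trans hr.2.le h21⟩)).2⟩
  set c := sInf (X '' Icc t₁ t₂) with hcdef
  set S := sSup (X '' Ico t₁ t₂) with hSdef
  set A₁ := {y : ℝ | ∃ u ∈ Icc (0:ℝ) t₁, y = sInf (X '' Icc u t₁)} with hA₁def
  set A₂ := {y : ℝ | ∃ u ∈ Icc (0:ℝ) t₂, y = sInf (X '' Icc u t₂)} with hA₂def
  -- basic facts about c and S
  have hcle : ∀ r : ℝ, t₁ ≤ r → r ≤ t₂ → c ≤ X r := fun r h1 h2 =>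
    csInf_le (hbb t₁ t₂ h0 h21) ⟨r, ⟨h1, h2⟩, rfl⟩
  have hSge : ∀ r : ℝ, t₁ ≤ r → r < t₂ → X r ≤ S := fun r h1 h2 =>
    le_csSup hba ⟨r, ⟨h1, h2⟩, rfl⟩
  have hcS : c ≤ S := le_trans (hcle t₁ le_rfl h12.le) (hSge t₁ le_rfl h12)
  -- splitting formula
  have hmin : ∀ u : ℝ, 0 ≤ u → u ≤ t₁ →
      sInf (X '' Icc u t₂) = sInf (X '' Icc u t₁) ⊓ c := by
    intro u hu hut
    rw [← Icc_union_Icc_eq_Icc hut h12.le, image_union]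
    exact csInf_union (hbb u t₁ hu (le_trans h12.le h21))
      ⟨X u, mem_image_of_mem _ ⟨le_refl u, hut⟩⟩
      (hbb t₁ t₂ h0 h21) ⟨X t₁, mem_image_of_mem _ ⟨le_refl t₁, h12.le⟩⟩
  -- elements of A₁ are at most X t₁
  have hA₁le : ∀ y ∈ A₁, y ≤ X t₁ := by
    rintro y ⟨u, hu, rfl⟩
    exact csInf_le (hbb u t₁ hu.1 (le_trans h12.le h21))
      ⟨t₁, ⟨hu.2, le_refl t₁⟩, rfl⟩
  -- boundedness of A₁ A₂
  have hAbd : ∀ t : ℝ, 0 ≤ t → t ≤ 1 →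
      {y : ℝ | ∃ u ∈ Icc (0:ℝ) t, y = sInf (X '' Icc u t)} ⊆ Icc (-M) M := by
    intro t ht0 ht1
    rintro y ⟨u, hu, rfl⟩
    constructor
    · exact le_csInf ⟨X u, mem_image_of_mem _ ⟨le_refl u, hu.2⟩⟩ (by
        rintro b ⟨r, hr, rfl⟩
        linarith [(abs_le.1 (hM r ⟨le_trans hu.1 hr.1, le_trans hr.2 ht1⟩)).1])
    · exact le_trans (csInf_le (hbb u t hu.1 ht1) ⟨u, ⟨le_refl u, hu.2⟩, rfl⟩)
        (abs_le.1 (hM u ⟨hu.1, le_trans hu.2 ht1⟩)).2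
  have hA₁top : volume A₁ ≠ ⊤ :=
    ne_top_of_le_ne_top (measure_Icc_lt_top).ne
      (measure_mono (hAbd t₁ h0 (le_trans h12.le h21)))
  have hA₂top : volume A₂ ≠ ⊤ :=
    ne_top_of_le_ne_top (measure_Icc_lt_top).ne
      (measure_mono (hAbd t₂ (le_trans h0 h12.le) h21))
  have hDtop : volume (A₁ ∩ Iic c) ≠ ⊤ :=
    ne_top_of_le_ne_top hA₁top (measure_mono inter_subset_left)
  -- inclusions
  have hsub1 : A₁ ⊆ (A₁ ∩ Iic c) ∪ Icc c (X t₁) ∪ Icc c c := by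
    intro y hy
    rcases le_or_gt y c with h | h
    · exact Or.inl (Or.inl ⟨hy, h⟩)
    · exact Or.inl (Or.inr ⟨h.le, hA₁le y hy⟩)
  have hsub2 : A₁ ∩ Iic c ⊆ A₂ := by
    rintro y ⟨⟨u, hu, rfl⟩, hyc⟩
    exact ⟨u, ⟨hu.1, le_trans hu.2 h12.le⟩,
      ((hmin u hu.1 hu.2).trans (inf_eq_left.2 hyc)).symm⟩
  have hsub3 : A₂ ⊆ (A₁ ∩ Iic c) ∪ Icc c S ∪ Icc (X t₂) (X t₂) := by
    rintro y ⟨u, hu, rfl⟩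
    rcases le_or_gt u t₁ with h | h
    · rw [hmin u hu.1 h]
      rcases le_total (sInf (X '' Icc u t₁)) c with h' | h'
      · rw [inf_eq_left.2 h']
        exact Or.inl (Or.inl ⟨⟨u, ⟨hu.1, h⟩, rfl⟩, h'⟩)
      · rw [inf_eq_right.2 h']
        exact Or.inl (Or.inr ⟨le_refl c, hcS⟩)
    · rcases eq_or_lt_of_le hu.2 with h2 | h2
      · subst h2
        have hxx : sInf (X '' Icc u u) = X u := by
          rw [Icc_self, image_singleton, csInf_singleton]
        exact Or.inr ⟨hxx.ge, hxx.le⟩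
      · refine Or.inl (Or.inr ⟨?_, ?_⟩)
        · exact csInf_le_csInf (hbb t₁ t₂ h0 h21)
            ⟨X u, mem_image_of_mem _ ⟨le_refl u, hu.2⟩⟩
            (image_mono (Icc_subset_Icc h.le le_rfl))
        · exact le_trans
            (csInf_le (hbb u t₂ (le_trans h0 h.le) h21) ⟨u, ⟨le_refl u, hu.2⟩, rfl⟩)
            (hSge u h.le h2)
  -- measure estimates
  have e1 := meas_est A₁ (A₁ ∩ Iic c) hDtop c (X t₁) c c hsub1
  have e2 := meas_est A₂ (A₁ ∩ Iic c) hDtop c S (X t₂) (X t₂) hsub3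
  have e3 : (volume (A₁ ∩ Iic c)).toReal ≤ (volume A₁).toReal :=
    ENNReal.toReal_mono hA₁top (measure_mono inter_subset_left)
  have e4 : (volume (A₁ ∩ Iic c)).toReal ≤ (volume A₂).toReal :=
    ENNReal.toReal_mono hA₂top (measure_mono hsub2)
  have hz1 : max (c - c) 0 = 0 := by simp
  have hz2 : max (X t₂ - X t₂) 0 = 0 := by simp
  rw [hz1] at e1
  rw [hz2] at e2
  rw [abs_sub_le_iff]
  constructor
  · have := le_max_left (X t₁ - c) 0
    linarith [le_max_left (sSup (X '' Ico t₁ t₂) - c) 0]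
  · have := le_max_left (sSup (X '' Ico t₁ t₂) - c) 0
    linarith [le_max_left (X t₁ - c) 0]

theorem stmt3 (X : ℝ → ℝ)
    (hright : ∀ t ∈ Icc (0:ℝ) 1, ContinuousWithinAt X (Ici t) t)
    (hleft : ∀ t ∈ Ioc (0:ℝ) 1, ∃ L : ℝ,
      Tendsto X (nhdsWithin t (Iio t)) (nhds L) ∧ L ≤ X t) :
    ContinuousOn (fun s : ℝ =>
      (volume {y : ℝ | ∃ u ∈ Icc (0:ℝ) s, y = sInf (X '' Icc u s)}).toReal)
      (Icc (0:ℝ) 1) := by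
  obtain ⟨M, hM⟩ := cadlag_bdd X hright hleft
  set Y : ℝ → ℝ := fun s =>
    (volume {y : ℝ | ∃ u ∈ Icc (0:ℝ) s, y = sInf (X '' Icc u s)}).toReal with hYdef
  intro s hs
  rw [Metric.continuousWithinAt_iff]
  intro ε hε
  -- right estimate
  have hR : ∃ δ > 0, ∀ t ∈ Icc (0:ℝ) 1, s ≤ t → t - s < δ → |Y t - Y s| < ε := by
    have hXr := hright s hs
    rw [Metric.continuousWithinAt_iff] at hXr
    obtain ⟨δ₁, hδ₁pos, hδ₁⟩ := hXr (ε / 6) (by linarith)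
    refine ⟨δ₁, hδ₁pos, ?_⟩
    intro t ht hst hts
    rcases eq_or_lt_of_le hst with heq | hlt
    · rw [← heq]; simpa using hε
    · have hkey := key_est X M hM s t hs.1 hlt ht.2
      have hnear : ∀ r : ℝ, s ≤ r → r ≤ t → |X r - X s| < ε / 6 := by
        intro r h1 h2
        have hd : dist r s < δ₁ := by
          rw [Real.dist_eq, abs_of_nonneg (by linarith)]; linarith
        have := hδ₁ (mem_Ici.2 h1) hd
        rwa [Real.dist_eq] at this
      have hcge : X s - ε / 6 ≤ sInf (X '' Icc s t) := by
        refine le_csInf ⟨X s, mem_image_of_mem _ ⟨le_refl s, hlt.le⟩⟩ ?_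
        rintro b ⟨r, hr, rfl⟩
        linarith [(abs_lt.1 (hnear r hr.1 hr.2)).1]
      have hSle : sSup (X '' Ico s t) ≤ X s + ε / 6 := by
        refine csSup_le ⟨X s, mem_image_of_mem _ ⟨le_refl s, hlt⟩⟩ ?_
        rintro b ⟨r, hr, rfl⟩
        linarith [(abs_lt.1 (hnear r hr.1 hr.2.le)).2]
      have hb1 : max (X s - sInf (X '' Icc s t)) 0 ≤ ε / 6 :=
        max_le (by linarith) (by linarith)
      have hb2 : max (sSup (X '' Ico s t) - sInf (X '' Icc s t)) 0 ≤ ε / 3 :=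
        max_le (by linarith) (by linarith)
      calc |Y t - Y s| ≤ _ := hkey
        _ ≤ ε / 6 + ε / 3 := add_le_add hb1 hb2
        _ < ε := by linarith
  -- left estimate
  have hL : ∃ δ > 0, ∀ t ∈ Icc (0:ℝ) 1, t < s → s - t < δ → |Y t - Y s| < ε := by
    by_cases h0s : 0 < s
    · obtain ⟨L, hLt, hLX⟩ := hleft s ⟨h0s, hs.2⟩
      rw [Metric.tendsto_nhdsWithin_nhds] at hLt
      obtain ⟨δ₂, hδ₂pos, hδ₂⟩ := hLt (ε / 6) (by linarith)
      refine ⟨δ₂, hδ₂pos, ?_⟩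
      intro t ht hts hst
      have hkey := key_est X M hM t s ht.1 hts hs.2
      have hnear : ∀ r : ℝ, t ≤ r → r < s → |X r - L| < ε / 6 := by
        intro r h1 h2
        have hd : dist r s < δ₂ := by
          rw [Real.dist_eq, abs_of_nonpos (by linarith)]; linarith
        have := hδ₂ (mem_Iio.2 h2) hd
        rwa [Real.dist_eq] at this
      have hcge : L - ε / 6 ≤ sInf (X '' Icc t s) := by
        refine le_csInf ⟨X t, mem_image_of_mem _ ⟨le_refl t, hts.le⟩⟩ ?_
        rintro b ⟨r, hr, rfl⟩
        rcases eq_or_lt_of_le hr.2 with h2 | h2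
        · rw [h2]; linarith
        · linarith [(abs_lt.1 (hnear r hr.1 h2)).1]
      have hSle : sSup (X '' Ico t s) ≤ L + ε / 6 := by
        refine csSup_le ⟨X t, mem_image_of_mem _ ⟨le_refl t, hts⟩⟩ ?_
        rintro b ⟨r, hr, rfl⟩
        linarith [(abs_lt.1 (hnear r hr.1 hr.2)).2]
      have hXt : X t ≤ L + ε / 6 := by
        linarith [(abs_lt.1 (hnear t le_rfl hts)).2]
      have hb1 : max (X t - sInf (X '' Icc t s)) 0 ≤ ε / 3 :=
        max_le (by linarith) (by linarith)
      have hb2 : max (sSup (X '' Ico t s) - sInf (X '' Icc t s)) 0 ≤ ε / 3 :=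
        max_le (by linarith) (by linarith)
      have : |Y s - Y t| ≤ ε / 3 + ε / 3 := le_trans hkey (add_le_add hb1 hb2)
      rw [abs_sub_comm]
      linarith
    · refine ⟨1, one_pos, ?_⟩
      intro t ht hts _
      exact absurd (lt_of_le_of_lt ht.1 hts) (by push_neg at h0s; exact not_lt.2 h0s)
  obtain ⟨δ₁, hδ₁pos, hδ₁⟩ := hR
  obtain ⟨δ₂, hδ₂pos, hδ₂⟩ := hL
  refine ⟨min δ₁ δ₂, lt_min hδ₁pos hδ₂pos, ?_⟩
  intro t ht hd
  rw [Real.dist_eq] at hd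
  rw [Real.dist_eq]
  rcases le_or_gt s t with h | h
  · exact hδ₁ t ht h (lt_of_le_of_lt (le_abs_self _) (lt_of_lt_of_le hd (min_le_left _ _)))
  · refine hδ₂ t ht h ?_
    rw [abs_sub_comm] at hd
    exact lt_of_le_of_lt (le_abs_self _) (lt_of_lt_of_le hd (min_le_right _ _))
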